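/- Let n ≥ 2 and let T ∈ GL_n(K) over a field K of characteristic zero. Suppose H : Kⁿ → Kⁿ is a polynomial map with H(0) = 0 such that the Jacobian of T⁻¹·H(Tx) is lower triangular with zeroes on the diagonal. Then there exist N ∈ ℕ, vectors b₁,…,b_N, c₁,…,c_N ∈ Kⁿ and positive integers d₁,…,d_N such that H = ∑_{i=1}^{N} (cᵢᵀx)^{dᵢ}·bᵢ and cⱼᵀbᵢ = 0 for all i ≥ j ≥ 1. -/

import Mathlib

open MvPolynomial Finset

section AuxPolarization

variable {R : Type*} [CommRing R]

lemma aux_sum_subsets (d : ℕ) (Rs : Finset (Fin d)) :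
    ∑ S : Finset (Fin d) with Rs ⊆ S, (-1 : R) ^ (d - S.card) =
      if Rs = univ then 1 else 0 := by
  classical
  have key : ∑ S : Finset (Fin d) with Rs ⊆ S, (-1 : R) ^ (d - S.card)
      = ∑ T ∈ (univ \ Rs).powerset, (-1 : R) ^ ((d - Rs.card) - T.card) := by
    refine (Finset.sum_nbij' (i := fun T => Rs ∪ T) (j := fun S => S \ Rs) ?_ ?_ ?_ ?_ ?_).symm
    · intro T hT; simp only [mem_filter, mem_univ, true_and]; exact subset_union_left
    · intro S hS; simp only [mem_powerset]; exact sdiff_subset_sdiff (subset_univ _) le_rfl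
    · intro T hT
      simp only [mem_powerset] at hT
      show (Rs ∪ T) \ Rs = T
      exact union_sdiff_cancel_left
        (Finset.disjoint_left.mpr fun x hx hx' => (mem_sdiff.mp (hT hx')).2 hx)
    · intro S hS
      simp only [mem_filter] at hS
      show Rs ∪ S \ Rs = S
      exact union_sdiff_of_subset hS.2
    · intro T hT
      simp only [mem_powerset] at hT
      congr 1
      have hdisj : Disjoint Rs T := by
        refine Finset.disjoint_left.mpr fun x hx hx' => ?_
        exact (mem_sdiff.mp (hT hx')).2 hx
      rw [card_union_of_disjoint hdisj]
      have h1 : Rs.card + T.card ≤ d := by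
        rw [← card_union_of_disjoint hdisj]
        exact (card_le_univ _).trans (by simp)
      omega
  rw [key]
  have hpow : ∀ T ∈ (univ \ Rs).powerset, (-1 : R) ^ ((d - Rs.card) - T.card)
      = (-1 : R) ^ (d - Rs.card) * (-1 : R) ^ T.card := by
    intro T hT
    simp only [mem_powerset] at hT
    have h2 : T.card ≤ d - Rs.card := by
      have := card_le_card hT
      simpa [card_sdiff_of_subset (subset_univ Rs)] using this
    have : (-1 : R) ^ ((d - Rs.card) - T.card) * ((-1) ^ T.card * (-1) ^ T.card)
        = (-1 : R) ^ (d - Rs.card) * (-1) ^ T.card := by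
      rw [← mul_assoc, ← pow_add]
      congr 2
      omega
    simpa [← pow_add, ← two_mul, pow_mul] using this
  rw [Finset.sum_congr rfl hpow, ← Finset.mul_sum]
  have : (∑ T ∈ (univ \ Rs).powerset, (-1 : R) ^ T.card)
      = ((∑ T ∈ (univ \ Rs).powerset, (-1 : ℤ) ^ T.card : ℤ) : R) := by
    push_cast; rfl
  rw [this, Finset.sum_powerset_neg_one_pow_card]
  by_cases h : Rs = univ
  · simp [h]
  · have : univ \ Rs ≠ ∅ := by
      simp only [ne_eq, sdiff_eq_empty_iff_subset]
      exact fun hc => h (eq_top_iff.mpr hc)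
    simp [this, h]

lemma polarization (d : ℕ) (y : Fin d → R) :
    ∑ S : Finset (Fin d), (-1 : R) ^ (d - S.card) * (∑ j ∈ S, y j) ^ d
      = (d.factorial : R) * ∏ j, y j := by
  classical
  have step1 : ∀ S : Finset (Fin d),
      (∑ j ∈ S, y j) ^ d = ∑ g : Fin d → Fin d,
        if ∀ i, g i ∈ S then ∏ i, y (g i) else 0 := by
    intro S
    rw [Finset.sum_pow']
    have : Fintype.piFinset (fun _ : Fin d => S)
        = univ.filter (fun g : Fin d → Fin d => ∀ i, g i ∈ S) := by
      ext g; simp [Fintype.mem_piFinset]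
    rw [this, Finset.sum_filter]
  simp_rw [step1, Finset.mul_sum]
  rw [Finset.sum_comm]
  have step2 : ∀ g : Fin d → Fin d,
      (∑ S : Finset (Fin d), (-1 : R) ^ (d - S.card) *
        if ∀ i, g i ∈ S then ∏ i, y (g i) else 0)
      = (if Finset.image g univ = univ then 1 else 0) * ∏ i, y (g i) := by
    intro g
    have : ∀ S : Finset (Fin d),
        ((-1 : R) ^ (d - S.card) * if ∀ i, g i ∈ S then ∏ i, y (g i) else 0)
        = if Finset.image g univ ⊆ S then (-1 : R) ^ (d - S.card) * ∏ i, y (g i) else 0 := by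
      intro S
      have hc : (Finset.image g univ ⊆ S) ↔ ∀ i, g i ∈ S := by
        rw [Finset.image_subset_iff]; simp
      by_cases h : ∀ i, g i ∈ S
      · rw [if_pos h, if_pos (hc.mpr h)]
      · rw [if_neg h, if_neg (fun hh => h (hc.mp hh)), mul_zero]
    simp_rw [this]
    rw [← Finset.sum_filter, ← Finset.sum_mul, aux_sum_subsets]
  simp_rw [step2, ite_mul, one_mul, zero_mul]
  rw [← Finset.sum_filter]
  have step3 : (univ.filter (fun g : Fin d → Fin d => Finset.image g univ = univ))
      = univ.image (fun σ : Equiv.Perm (Fin d) => ⇑σ) := by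
    ext g
    simp only [mem_filter, mem_univ, true_and, Finset.mem_image]
    constructor
    · intro h
      have hsurj : Function.Surjective g := by
        intro x
        have hx : x ∈ (univ : Finset (Fin d)) := mem_univ x
        rw [← h] at hx
        simpa using hx
      have hbij : Function.Bijective g := Finite.surjective_iff_bijective.mp hsurj
      exact ⟨Equiv.ofBijective g hbij, rfl⟩
    · rintro ⟨σ, rfl⟩
      ext x
      simp only [Finset.mem_image, mem_univ, true_and, iff_true]
      exact ⟨σ.symm x, by simp⟩
  rw [step3, Finset.sum_image (by intro a _ b _ h; exact Equiv.coe_fn_injective h)]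
  have step4 : ∀ σ : Equiv.Perm (Fin d), ∏ i, y (σ i) = ∏ i, y i := fun σ =>
    Equiv.prod_comp σ y
  simp_rw [step4]
  rw [Finset.sum_const, card_univ, Fintype.card_perm, Fintype.card_fin,
    nsmul_eq_mul]

open MvPolynomial in
lemma monomial_mem_span {K : Type*} [Field K] [CharZero K] {n : ℕ} (p : Fin n)
    (m : Fin n →₀ ℕ) (hm : m ≠ 0) (hsupp : ∀ t, p ≤ t → m t = 0) :
    (monomial m (1 : K)) ∈ Submodule.span K
      {g : MvPolynomial (Fin n) K | ∃ (d : ℕ) (c : Fin n → K), 0 < d ∧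
        (∀ t, p ≤ t → c t = 0) ∧ g = (∑ t, C (c t) * X t) ^ d} := by
  classical
  set l : List (Fin n) := m.toMultiset.toList with hl
  set d : ℕ := l.length with hdd
  have hd : 0 < d := by
    rw [hdd, List.length_pos_iff]
    intro hnil
    apply hm
    have h0 : m.toMultiset = 0 := by
      rw [← Multiset.coe_toList m.toMultiset, ← hl, hnil]; rfl
    ext a
    have h2 := congrArg (fun s => Multiset.count a s) h0
    simpa [Finsupp.count_toMultiset] using h2
  have key := polarization (R := MvPolynomial (Fin n) K) d (fun j => X (l.get j))
  -- (a) the product is the monomial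
  have ha : (∏ j : Fin d, (X (l.get j) : MvPolynomial (Fin n) K)) = monomial m 1 := by
    rw [show (fun j => (X (l.get j) : MvPolynomial (Fin n) K)) = (X : Fin n → MvPolynomial (Fin n) K) ∘ l.get from rfl,
      ← List.prod_ofFn, ← List.map_ofFn, List.ofFn_get]
    have h1 : (l.map (X : Fin n → MvPolynomial (Fin n) K)).prod
        = ((m.toMultiset.map X) : Multiset (MvPolynomial (Fin n) K)).prod := by
      rw [← Multiset.prod_coe, ← Multiset.map_coe]
      congr 1
      rw [hl, Multiset.coe_toList]
    rw [h1, Finsupp.toMultiset_map, Finsupp.prod_toMultiset,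
      Finsupp.prod_mapDomain_index (fun a => pow_zero _) (fun a b c => pow_add _ _ _),
      monomial_eq, C_1, one_mul]
  -- coefficients of the sub-sums
  set cc : Finset (Fin d) → Fin n → K :=
    fun S t => ((S.filter fun j => l.get j = t).card : K) with hcc
  have hb : ∀ S : Finset (Fin d),
      (∑ j ∈ S, (X (l.get j) : MvPolynomial (Fin n) K)) = ∑ t, C (cc S t) * X t := by
    intro S
    rw [← Finset.sum_fiberwise_of_maps_to (g := fun j => l.get j)
      (fun j _ => Finset.mem_univ (l.get j)) (fun j => (X (l.get j) : MvPolynomial (Fin n) K))]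
    refine Finset.sum_congr rfl fun t _ => ?_
    have : ∀ j ∈ S.filter (fun j => l.get j = t),
        (X (l.get j) : MvPolynomial (Fin n) K) = X t := by
      intro j hj
      rw [(Finset.mem_filter.mp hj).2]
    rw [Finset.sum_congr rfl this, Finset.sum_const]
    simp only [hcc, nsmul_eq_mul, C_eq_coe_nat]
  have hcz : ∀ S t, p ≤ t → cc S t = 0 := by
    intro S t ht
    have hemp : (S.filter fun j => l.get j = t) = ∅ := by
      rw [Finset.filter_eq_empty_iff]
      intro j hj hjt
      have hmem : l.get j ∈ m.toMultiset := by
        have h4 : l.get j ∈ l := by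
          simpa using List.get_mem l j.1 j.2
        rw [← Multiset.mem_toList]
        exact h4
      rw [Finsupp.mem_toMultiset, Finsupp.mem_support_iff, hjt] at hmem
      exact hmem (hsupp t ht)
    simp only [hcc]
    rw [hemp]
    simp
  -- main equality
  have hfac : ((d.factorial : K)) ≠ 0 := Nat.cast_ne_zero.mpr d.factorial_ne_zero
  have heq : monomial m (1 : K) = ∑ S : Finset (Fin d),
      (((d.factorial : K))⁻¹ * (-1 : K) ^ (d - S.card)) •
        (∑ t, C (cc S t) * X t) ^ d := by
    have key' : ∑ S : Finset (Fin d),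
        ((-1 : K) ^ (d - S.card)) • (∑ t, C (cc S t) * X t) ^ d
        = (d.factorial : K) • monomial m (1 : K) := by
      rw [← ha, smul_eq_C_mul, map_natCast, ← key]
      refine Finset.sum_congr rfl fun S _ => ?_
      rw [hb S, smul_eq_C_mul, map_pow, map_neg, C_1]
    have := congrArg (fun z => ((d.factorial : K))⁻¹ • z) key'
    simp only [smul_smul, inv_mul_cancel₀ hfac, one_smul] at this
    rw [← this]
    refine (Finset.smul_sum).trans (Finset.sum_congr rfl fun S _ => ?_)
    rw [smul_smul]
  rw [heq]
  refine Submodule.sum_mem _ fun S _ => Submodule.smul_mem _ _ (Submodule.subset_span ?_)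
  exact ⟨d, cc S, hd, hcz S, rfl⟩

section MvHelpers

variable {K : Type*} [Field K] {n : ℕ}

lemma eval_bind₁' (x : Fin n → K) (g : Fin n → MvPolynomial (Fin n) K)
    (φ : MvPolynomial (Fin n) K) :
    eval x (bind₁ g φ) = eval (fun i => eval x (g i)) φ := by
  exact eval₂Hom_bind₁ _ _ _ _

lemma bind_lin_lin (A B : Matrix (Fin n) (Fin n) K) (f : MvPolynomial (Fin n) K) :
    bind₁ (fun t : Fin n => ∑ s, C (A t s) * X s)
      (bind₁ (fun t : Fin n => ∑ s, C (B t s) * X s) f)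
    = bind₁ (fun t : Fin n => ∑ s, C ((B * A) t s) * X s) f := by
  rw [bind₁_bind₁]
  apply congrArg (fun g => (bind₁ g : MvPolynomial (Fin n) K →ₐ[K] _) f)
  funext t
  simp only [map_sum, map_mul, algHom_C, algebraMap_eq, bind₁_X_right, Finset.mul_sum]
  rw [Finset.sum_comm]
  refine Finset.sum_congr rfl fun u _ => ?_
  rw [Matrix.mul_apply, map_sum, Finset.sum_mul]
  exact Finset.sum_congr rfl fun s _ => by rw [← mul_assoc, ← C_mul]

lemma bind_lin_one (f : MvPolynomial (Fin n) K) :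
    bind₁ (fun t : Fin n => ∑ s, C ((1 : Matrix (Fin n) (Fin n) K) t s) * X s) f = f := by
  have : (fun t : Fin n => ∑ s, C ((1 : Matrix (Fin n) (Fin n) K) t s) * X s)
      = (X : Fin n → MvPolynomial (Fin n) K) := by
    funext t
    simp [Matrix.one_apply, apply_ite C, ite_mul]
  rw [this, bind₁_X_left]
  rfl

lemma coeff_pderiv' (q : Fin n) (f : MvPolynomial (Fin n) K) (m : Fin n →₀ ℕ) :
    coeff m (pderiv q f) = ((m q + 1 : ℕ) : K) * coeff (m + Finsupp.single q 1) f := by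
  classical
  induction f using MvPolynomial.induction_on' with
  | monomial s a =>
    rw [pderiv_monomial, coeff_monomial, coeff_monomial]
    by_cases h : s = m + Finsupp.single q 1
    · subst h
      rw [if_pos, if_pos rfl]
      · rw [Finsupp.add_apply, Finsupp.single_apply, if_pos rfl]
        push_cast
        ring
      · ext t
        simp only [Finsupp.tsub_apply, Finsupp.add_apply, Finsupp.single_apply]
        by_cases ht : q = t <;> simp [ht]
    · rw [if_neg h]
      by_cases h2 : s - Finsupp.single q 1 = m
      · rw [if_pos h2]
        by_cases hq : s q = 0
        · simp [hq]
        · exfalso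
          apply h
          ext t
          have := congrFun (congrArg (fun (g : Fin n →₀ ℕ) => (g : Fin n → ℕ)) h2) t
          simp only [Finsupp.tsub_apply, Finsupp.single_apply] at this
          simp only [Finsupp.add_apply, Finsupp.single_apply]
          by_cases ht : q = t
          · subst ht; simp at this ⊢; omega
          · simp [ht] at this ⊢; omega
      · rw [if_neg h2, mul_zero]
  | add f g hf hg =>
    rw [map_add, coeff_add, coeff_add, hf, hg, mul_add]

lemma coeff_eq_zero_of_pderiv (q : Fin n) (f : MvPolynomial (Fin n) K) [CharZero K]
    (h : pderiv q f = 0) (m : Fin n →₀ ℕ) (hm : m q ≠ 0) : coeff m f = 0 := by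
  classical
  have h1 := coeff_pderiv' q f (m - Finsupp.single q 1)
  rw [h, coeff_zero] at h1
  have h2 : m - Finsupp.single q 1 + Finsupp.single q 1 = m := by
    ext t
    simp only [Finsupp.add_apply, Finsupp.tsub_apply, Finsupp.single_apply]
    by_cases ht : q = t
    · subst ht; simp; omega
    · simp [ht]
  rw [h2] at h1
  have h3 : ((((m - Finsupp.single q 1 : Fin n →₀ ℕ) q + 1 : ℕ)) : K) ≠ 0 :=
    Nat.cast_ne_zero.mpr (Nat.succ_ne_zero _)
  exact (mul_eq_zero.mp h1.symm).resolve_left h3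

lemma bind_lin_form (A : Matrix (Fin n) (Fin n) K) (cv : Fin n → K) :
    bind₁ (fun t : Fin n => ∑ s, C (A t s) * X s) (∑ t, C (cv t) * X t)
      = ∑ s, C (∑ u, cv u * A u s) * X s := by
  simp only [map_sum, map_mul, algHom_C, algebraMap_eq, bind₁_X_right, Finset.mul_sum]
  rw [Finset.sum_comm]
  refine Finset.sum_congr rfl fun s _ => ?_
  rw [Finset.sum_mul]
  exact Finset.sum_congr rfl fun u _ => (mul_assoc _ _ _).symm

end MvHelpers

lemma poly_decomp {K : Type*} [Field K] [CharZero K] {n : ℕ} (p : Fin n)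
    (f : MvPolynomial (Fin n) K) (h0 : coeff 0 f = 0)
    (hv : ∀ m ∈ f.support, ∀ t : Fin n, p ≤ t → m t = 0) :
    ∃ (N : ℕ) (a : Fin N → K) (c : Fin N → Fin n → K) (d : Fin N → ℕ),
      (∀ i, 0 < d i) ∧ (∀ i t, p ≤ t → c i t = 0) ∧
      f = ∑ i, C (a i) * (∑ t, C (c i t) * X t) ^ d i := by
  classical
  set s : Set (MvPolynomial (Fin n) K) :=
    {g | ∃ (d : ℕ) (c : Fin n → K), 0 < d ∧
      (∀ t, p ≤ t → c t = 0) ∧ g = (∑ t, C (c t) * X t) ^ d} with hs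
  have hmem : f ∈ Submodule.span K s := by
    rw [f.as_sum]
    refine Submodule.sum_mem _ fun m hm => ?_
    have hm0 : m ≠ 0 := by
      rintro rfl
      exact (MvPolynomial.mem_support_iff.mp hm) h0
    have : monomial m (coeff m f) = (coeff m f) • monomial m (1 : K) := by
      rw [smul_monomial, smul_eq_mul, mul_one]
    rw [this]
    exact Submodule.smul_mem _ _ (monomial_mem_span p m hm0 (hv m hm))
  rw [Submodule.mem_span_set'] at hmem
  obtain ⟨N, fc, g, hsum⟩ := hmem
  choose d c hd hc hg using fun i => (g i).2
  refine ⟨N, fc, c, d, hd, hc, ?_⟩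
  rw [← hsum]
  refine Finset.sum_congr rfl fun i _ => ?_
  rw [← hg i, smul_eq_C_mul]

end AuxPolarization

/-- If `H(0) = 0` and for some `T ∈ GL_n(K)` the Jacobian of `T⁻¹ H(Tx)` is lower
triangular with zeroes on the diagonal, then `H = ∑_{i=1}^N (cᵢᵀx)^{dᵢ} bᵢ` with
`cⱼᵀbᵢ = 0` for all `i ≥ j` (form (*)). -/
theorem stmt15 (K : Type*) [Field K] [CharZero K] (n : ℕ) (hn : 2 ≤ n)
    (T : Matrix (Fin n) (Fin n) K) (hT : IsUnit T.det)
    (H : Fin n → MvPolynomial (Fin n) K)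
    (hH0 : ∀ j, eval (0 : Fin n → K) (H j) = 0)
    (G : Fin n → MvPolynomial (Fin n) K)
    (hG : ∀ p, G p = ∑ k, C (T⁻¹ p k) * bind₁ (fun t : Fin n => ∑ s, C (T t s) * X s) (H k))
    (htri : ∀ p q : Fin n, p ≤ q → pderiv q (G p) = 0) :
    ∃ (N : ℕ) (b c : Fin N → Fin n → K) (e : Fin N → ℕ),
      (∀ i, 0 < e i) ∧
      (∀ i j : Fin N, j ≤ i → ∑ t, c j t * b i t = 0) ∧
      ∀ p, H p = ∑ i, C (b i p) * (∑ t, C (c i t) * X t) ^ (e i) := by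
  classical
  have hTT : T * T⁻¹ = 1 := Matrix.mul_nonsing_inv T hT
  have hTT' : T⁻¹ * T = 1 := Matrix.nonsing_inv_mul T hT
  -- Step 1 : recover H from G
  have hstep1 : ∀ q, ∑ p, C (T q p) * G p
      = bind₁ (fun t : Fin n => ∑ s, C (T t s) * X s) (H q) := by
    intro q
    calc ∑ p, C (T q p) * G p
        = ∑ p, ∑ k, C (T q p * T⁻¹ p k) *
            bind₁ (fun t : Fin n => ∑ s, C (T t s) * X s) (H k) := by
          refine Finset.sum_congr rfl fun p _ => ?_
          rw [hG p, Finset.mul_sum]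
          exact Finset.sum_congr rfl fun k _ => by rw [← mul_assoc, ← C_mul]
      _ = ∑ k, C ((T * T⁻¹) q k) *
            bind₁ (fun t : Fin n => ∑ s, C (T t s) * X s) (H k) := by
          rw [Finset.sum_comm]
          refine Finset.sum_congr rfl fun k _ => ?_
          rw [Matrix.mul_apply, map_sum, Finset.sum_mul]
      _ = bind₁ (fun t : Fin n => ∑ s, C (T t s) * X s) (H q) := by
          rw [hTT]
          simp [Matrix.one_apply, apply_ite C, ite_mul]
  have hH : ∀ q, H q = ∑ p, C (T q p) *
      bind₁ (fun t : Fin n => ∑ s, C (T⁻¹ t s) * X s) (G p) := by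
    intro q
    have h1 : bind₁ (fun t : Fin n => ∑ s, C (T⁻¹ t s) * X s)
        (bind₁ (fun t : Fin n => ∑ s, C (T t s) * X s) (H q)) = H q := by
      rw [bind_lin_lin, hTT, bind_lin_one]
    rw [← h1, ← hstep1 q, map_sum]
    exact Finset.sum_congr rfl fun p _ => by rw [map_mul, algHom_C, algebraMap_eq]
  -- Step 2 : constant coefficient of G p is zero
  have hG0 : ∀ p, coeff 0 (G p) = 0 := by
    intro p
    have h1 : eval (0 : Fin n → K) (G p) = 0 := by
      rw [hG p]
      simp only [map_sum, map_mul, eval_C]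
      have h2 : ∀ k, eval (0 : Fin n → K)
          (bind₁ (fun t : Fin n => ∑ s, C (T t s) * X s) (H k)) = 0 := by
        intro k
        rw [eval_bind₁']
        have h3 : (fun i => eval (0 : Fin n → K) (∑ s, C (T i s) * X s))
            = (0 : Fin n → K) := by
          funext i; simp
        rw [h3]
        exact hH0 k
      exact Finset.sum_eq_zero fun k _ => by rw [h2 k, mul_zero]
    rwa [eval_zero, constantCoeff_eq] at h1
  -- Step 3 : support conditions
  have hGsupp : ∀ p, ∀ m ∈ (G p).support, ∀ t : Fin n, p ≤ t → m t = 0 := by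
    intro p m hm t hpt
    by_contra hmt
    exact (MvPolynomial.mem_support_iff.mp hm)
      (coeff_eq_zero_of_pderiv t (G p) (htri p t hpt) m hmt)
  -- Step 4 : decompose each G p
  choose N a c d hd hc hrep using fun p => poly_decomp p (G p) (hG0 p) (hGsupp p)
  set M : ℕ := univ.sup N with hM
  set a' : Fin n → ℕ → K := fun p i => if h : i < N p then a p ⟨i, h⟩ else 0 with ha'
  set c' : Fin n → ℕ → Fin n → K :=
    fun p i => if h : i < N p then c p ⟨i, h⟩ else 0 with hc'def
  set d' : Fin n → ℕ → ℕ := fun p i => if h : i < N p then d p ⟨i, h⟩ else 1 with hd'def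
  have hd' : ∀ p i, 0 < d' p i := by
    intro p i
    simp only [hd'def]
    split
    · exact hd p _
    · exact one_pos
  have hc'z : ∀ p i t, p ≤ t → c' p i t = 0 := by
    intro p i t hpt
    simp only [hc'def]
    split
    · exact hc p _ t hpt
    · rfl
  have hrep' : ∀ p, G p = ∑ i ∈ Finset.range M,
      C (a' p i) * (∑ t, C (c' p i t) * X t) ^ (d' p i) := by
    intro p
    have hNM : N p ≤ M := Finset.le_sup (Finset.mem_univ p)
    rw [hrep p]
    rw [← Finset.sum_subset (Finset.range_subset_range.mpr hNM) (by
      intro i hi hni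
      rw [Finset.mem_range] at hni
      have : ¬ i < N p := hni
      simp [ha', this])]
    rw [← Fin.sum_univ_eq_sum_range (fun i =>
      C (a' p i) * (∑ t, C (c' p i t) * X t) ^ (d' p i)) (N p)]
    refine Finset.sum_congr rfl fun i _ => ?_
    have hi : (i : ℕ) < N p := i.isLt
    simp only [ha', hc'def, hd'def, dif_pos hi]
  -- Step 5 : assemble
  refine ⟨n * M,
    fun i q => T q i.divNat * a' i.divNat i.modNat,
    fun i t => ∑ u, c' i.divNat i.modNat u * T⁻¹ u t,
    fun i => d' i.divNat i.modNat, fun i => hd' _ _, ?_, ?_⟩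
  · -- orthogonality
    intro i j hji
    have hMpos : 0 < M := by
      rcases Nat.eq_zero_or_pos M with h | h
      · exact absurd i.pos (by simp [h])
      · exact h
    have hji' : (j : ℕ) ≤ (i : ℕ) := hji
    have hple : j.divNat ≤ i.divNat := by
      rw [Fin.le_def, Fin.coe_divNat, Fin.coe_divNat]
      exact Nat.div_le_div_right hji'
    calc ∑ t, (∑ u, c' j.divNat j.modNat u * T⁻¹ u t) * (T t i.divNat * a' i.divNat i.modNat)
        = ∑ t, ∑ u, c' j.divNat j.modNat u * T⁻¹ u t * (T t i.divNat * a' i.divNat i.modNat) := by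
          exact Finset.sum_congr rfl fun t _ => by rw [Finset.sum_mul]
      _ = ∑ u, ∑ t, c' j.divNat j.modNat u * T⁻¹ u t * (T t i.divNat * a' i.divNat i.modNat) :=
          Finset.sum_comm
      _ = ∑ u, c' j.divNat j.modNat u * (T⁻¹ * T) u i.divNat * a' i.divNat i.modNat := by
          refine Finset.sum_congr rfl fun u _ => ?_
          rw [Matrix.mul_apply, Finset.mul_sum, Finset.sum_mul]
          exact Finset.sum_congr rfl fun t _ => by ring
      _ = 0 := by
          rw [hTT']
          refine Finset.sum_eq_zero fun u _ => ?_
          by_cases hu : u = i.divNat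
          · subst hu
            rw [hc'z _ _ _ hple, zero_mul, zero_mul]
          · simp [Matrix.one_apply, hu]
  · -- the representation
    intro q
    rw [hH q]
    rw [← Equiv.sum_comp (finProdFinEquiv (m := n) (n := M))]
    have hdiv : ∀ x : Fin n × Fin M, (finProdFinEquiv x).divNat = x.1 := by
      intro x
      have := finProdFinEquiv.symm_apply_apply x
      rw [finProdFinEquiv_symm_apply] at this
      exact congrArg Prod.fst this
    have hmod : ∀ x : Fin n × Fin M, (finProdFinEquiv x).modNat = x.2 := by
      intro x
      have := finProdFinEquiv.symm_apply_apply x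
      rw [finProdFinEquiv_symm_apply] at this
      exact congrArg Prod.snd this
    rw [Fintype.sum_prod_type]
    refine Finset.sum_congr rfl fun p _ => ?_
    rw [hrep' p, map_sum, Finset.mul_sum]
    rw [← Fin.sum_univ_eq_sum_range (fun r =>
      C (T q p) * (bind₁ (fun t : Fin n => ∑ s, C (T⁻¹ t s) * X s))
        (C (a' p r) * (∑ t, C (c' p r t) * X t) ^ (d' p r))) M]
    refine Finset.sum_congr rfl fun r _ => ?_
    beta_reduce
    rw [hdiv (p, r), hmod (p, r)]
    rw [map_mul, algHom_C, algebraMap_eq, map_pow, bind_lin_form, ← mul_assoc, ← C_mul]
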